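/- arXiv:2204.12903 — 3 statements merged into one kernel-verified Lean document; each statement's English description precedes it below -/
import Mathlib

section
/- Let X be a type of databases with adjacency relation Adj, and let (Mᵢ : X → PMF R)_{i ∈ Finset.range n} be a finite family of randomized mechanisms with a common countable output type R, where each Mᵢ is εᵢ-differentially private with respect to Adj (εᵢ ≥ 0). Then the joint mechanism M : X → PMF (Fin n → R), obtained by running all n mechanisms independently on the same input (i.e., the product of the n probability mass functions built by sequentially binding M₀ x, M₁ x, …, M_{n−1} x), is (∑ i, εᵢ)-differentially private: for all x y with Adj x y and every output vector v : Fin n → R, (M x) v ≤ Real.exp (∑ i, εᵢ) * (M y) v. -/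
set_option maxHeartbeats 1000000


/-- A mechanism `M : X → PMF R` is `ε`-differentially private w.r.t. the
adjacency relation `Adj` if for all neighboring databases `x, y` and every
output `r`, `(M x) r ≤ exp ε * (M y) r`. -/
def IsDP {X R : Type*} (Adj : X → X → Prop) (ε : ℝ) (M : X → PMF R) : Prop :=
  ∀ x y, Adj x y → ∀ r : R, (M x) r ≤ ENNReal.ofReal (Real.exp ε) * (M y) r

/-- The product of `n` probability mass functions, built by sequentially
binding them: running all of them independently and returning the vector of
outcomes. -/
noncomputable def piPMF {R : Type*} : (n : ℕ) → (Fin n → PMF R) → PMF (Fin n → R)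
  | 0, _ => PMF.pure (fun i => i.elim0)
  | n + 1, p =>
      (p 0).bind (fun r => (piPMF n (fun i => p i.succ)).map (fun v => Fin.cons r v))

lemma piPMF_succ_apply {R : Type*} (n : ℕ) (p : Fin (n + 1) → PMF R)
    (v : Fin (n + 1) → R) :
    piPMF (n + 1) p v = p 0 (v 0) * piPMF n (fun i => p i.succ) (Fin.tail v) := by
  simp only [piPMF, PMF.bind_apply, PMF.map_apply]
  rw [tsum_eq_single (v 0)]
  · congr 1
    rw [tsum_eq_single (Fin.tail v)]
    · simp [Fin.cons_self_tail]
    · intro w hw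
      rw [if_neg]
      intro h
      exact hw (show w = Fin.tail v by rw [h, Fin.tail_cons])
  · intro r hr
    convert mul_zero (p 0 r)
    rw [ENNReal.summable.tsum_eq_zero_iff]
    intro w
    rw [if_neg]
    intro h
    exact hr (by rw [h, Fin.cons_zero])

/-- n-fold composition: running `n` mechanisms `M i`, each `ε i`-DP,
independently on the same input yields a `(∑ i, ε i)`-DP mechanism. -/
theorem dp_nfold_composition {X R : Type*} [Countable R]
    (Adj : X → X → Prop) (n : ℕ) (ε : Fin n → ℝ) (hε : ∀ i, 0 ≤ ε i)
    (M : Fin n → X → PMF R) (hM : ∀ i, IsDP Adj (ε i) (M i)) :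
    IsDP Adj (∑ i, ε i) (fun x => piPMF n (fun i => M i x)) := by
  induction n with
  | zero =>
      intro x y _ v
      simp only [piPMF, PMF.pure_apply, Fin.sum_univ_zero, Real.exp_zero,
        ENNReal.ofReal_one, one_mul]
      exact le_rfl
  | succ n ih =>
      intro x y hxy v
      have h0 := hM 0 x y hxy (v 0)
      have htail := ih (fun i => ε i.succ) (fun i => hε i.succ)
        (fun i => M i.succ) (fun i => hM i.succ) x y hxy (Fin.tail v)
      simp only [piPMF_succ_apply]
      refine (mul_le_mul' h0 htail).trans (le_of_eq ?_)
      rw [Fin.sum_univ_succ, Real.exp_add, ENNReal.ofReal_mul (Real.exp_pos _).le]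
      ring
end

section
/- Let X be a type of databases with adjacency relation Adj, let ε > 0, let 0 < α < 1 and β : ℕ with β > 0. Suppose: (i) S : X → PMF R₀ is ε_S-differentially private, (ii) C⋆ : X → PMF R₀ is ε_{f⋆}-differentially private, (iii) for each i ∈ Fin β, Cᵢ : X → PMF R₀ is (((1 − α)·ε)/β)-differentially private, all with respect to Adj, and (iv) ε_S + ε_{f⋆} = α·ε. Then the combined SuperQUAIL mechanism — running S, C⋆, and all β mechanisms Cᵢ independently on the same input and returning the tuple of all β + 2 outputs — is ε-differentially private: for all x y with Adj x y and every output tuple t, the probability of t under the combined mechanism on x is at most Real.exp ε times its probability on y (using that β·((1 − α)·ε/β) + ε_S + ε_{f⋆} = ε). -/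
lemma isDP_congr {X R : Type*} {Adj : X → X → Prop} {ε ε' : ℝ} {M : X → PMF R}
    (h : IsDP Adj ε M) (he : ε = ε') : IsDP Adj ε' M := he ▸ h

lemma isDP_const {X R : Type*} (Adj : X → X → Prop) (p : PMF R) :
    IsDP Adj 0 (fun _ => p) := by
  intro x y _ r
  simp

lemma isDP_bind {X A B : Type*} {Adj : X → X → Prop} {ε₁ ε₂ : ℝ}
    {M : X → PMF A} {F : X → A → PMF B}
    (h₁ : IsDP Adj ε₁ M) (h₂ : ∀ a, IsDP Adj ε₂ (fun x => F x a)) :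
    IsDP Adj (ε₁ + ε₂) (fun x => (M x).bind (F x)) := by
  intro x y h b
  simp only [PMF.bind_apply]
  calc ∑' a, M x a * F x a b
      ≤ ∑' a, (ENNReal.ofReal (Real.exp ε₁) * M y a) *
          (ENNReal.ofReal (Real.exp ε₂) * F y a b) :=
        ENNReal.tsum_le_tsum fun a => mul_le_mul' (h₁ x y h a) (h₂ a x y h b)
    _ = ENNReal.ofReal (Real.exp (ε₁ + ε₂)) * ∑' a, M y a * F y a b := by
        rw [Real.exp_add, ENNReal.ofReal_mul (Real.exp_pos _).le,
          ← ENNReal.tsum_mul_left]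
        congr 1; funext a; ring

lemma isDP_map {X A B : Type*} {Adj : X → X → Prop} {ε : ℝ}
    {M : X → PMF A} (f : A → B) (h : IsDP Adj ε M) :
    IsDP Adj ε (fun x => (M x).map f) := by
  have := isDP_bind (F := fun _ a => PMF.pure (f a)) h
    (fun a => isDP_const Adj (PMF.pure (f a)))
  simp only [add_zero] at this
  exact this

lemma isDP_pi {X R : Type*} {Adj : X → X → Prop} {ε₀ : ℝ} :
    ∀ (n : ℕ) (M : Fin n → X → PMF R), (∀ i, IsDP Adj ε₀ (M i)) →
      IsDP Adj (n * ε₀) (fun x => piPMF n (fun i => M i x))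
  | 0, _, _ => by
      intro x y _ r
      simp [piPMF]
      split <;> simp
  | n + 1, M, h => by
      have ih := isDP_pi n (fun i => M i.succ) (fun i => h i.succ)
      have := isDP_bind (M := M 0)
        (F := fun x r => (piPMF n (fun i => M i.succ x)).map (fun v => (Fin.cons r v : Fin (n+1) → R)))
        (h 0) (fun r => isDP_map (fun v : Fin n → R => (Fin.cons r v : Fin (n+1) → R)) ih)
      refine isDP_congr this ?_
      push_cast
      ring

/-- Privacy of SuperQUAIL: the synthesizer `S` (budget `ε_S`) and the
target-feature classifier `C⋆` (budget `ε_{f⋆}`) together consume the DPSAGE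
share `α·ε` of the budget, and each of the `β` per-feature classifiers `Cᵢ`
consumes `((1−α)·ε)/β`; running all of them independently and returning the
tuple of all `β + 2` outputs is `ε`-differentially private. -/
theorem superquail_is_dp {X R₀ : Type*} [Countable R₀]
    (Adj : X → X → Prop) (ε α : ℝ) (β : ℕ)
    (hε : 0 < ε) (hα₀ : 0 < α) (hα₁ : α < 1) (hβ : 0 < β)
    (εS εf : ℝ)
    (S : X → PMF R₀) (Cstar : X → PMF R₀) (C : Fin β → X → PMF R₀)
    (hS : IsDP Adj εS S)
    (hCstar : IsDP Adj εf Cstar)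
    (hC : ∀ i, IsDP Adj ((1 - α) * ε / β) (C i))
    (hsplit : εS + εf = α * ε) :
    IsDP Adj ε
      (fun x => (S x).bind (fun s =>
        (Cstar x).bind (fun c =>
          (piPMF β (fun i => C i x)).map (fun v => (s, c, v))))) := by
  have hpi := isDP_pi β C hC
  have hinner : ∀ s c : R₀, IsDP Adj (β * ((1 - α) * ε / β))
      (fun x => (piPMF β (fun i => C i x)).map (fun v => (s, c, v))) :=
    fun s c => isDP_map _ hpi
  have h2 : ∀ s : R₀, IsDP Adj (εf + β * ((1 - α) * ε / β))
      (fun x => (Cstar x).bind (fun c =>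
        (piPMF β (fun i => C i x)).map (fun v => (s, c, v)))) :=
    fun s => isDP_bind hCstar (fun c => hinner s c)
  have h3 := isDP_bind hS h2
  refine isDP_congr h3 ?_
  have hβ' : (β : ℝ) ≠ 0 := Nat.cast_ne_zero.mpr hβ.ne'
  field_simp
  nlinarith [hsplit]
end

section
/- Let X be a type of databases with adjacency relation Adj. Let M₁ : X → PMF R₁ be ε₁-differentially private, and let M₂ : X → R₁ → PMF R₂ be a family of mechanisms such that for every fixed prior output r₁ : R₁, the mechanism x ↦ M₂ x r₁ is ε₂-differentially private with respect to Adj. Then the adaptive (sequential) composition M : X → PMF (R₁ × R₂), defined by M x = (M₁ x).bind (fun r₁ => (M₂ x r₁).map (fun r₂ => (r₁, r₂))), is (ε₁ + ε₂)-differentially private: for all x y with Adj x y and all (r₁, r₂), (M x) (r₁, r₂) ≤ Real.exp (ε₁ + ε₂) * (M y) (r₁, r₂). -/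
lemma bind_map_apply {X R₁ R₂ : Type*} (M₁ : X → PMF R₁) (M₂ : X → R₁ → PMF R₂)
    (x : X) (r₁ : R₁) (r₂ : R₂) :
    ((M₁ x).bind (fun a => (M₂ x a).map (fun b => (a, b)))) (r₁, r₂)
      = M₁ x r₁ * M₂ x r₁ r₂ := by
  rw [PMF.bind_apply]
  rw [tsum_eq_single r₁]
  · rw [PMF.map_apply, tsum_eq_single r₂]
    · simp
    · intro b hb
      simp [Prod.ext_iff, hb.symm]
  · intro a ha
    simp only [PMF.map_apply]
    rw [mul_eq_zero]
    right
    apply Summable.tsum_eq_zero_iff ENNReal.summable |>.2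
    intro b
    simp only [Prod.ext_iff, ite_eq_right_iff, and_imp]
    intro h _; exact absurd h.symm ha

/-- Adaptive (sequential) composition: if `M₁` is `ε₁`-DP and, for every fixed
prior output `r₁`, the mechanism `x ↦ M₂ x r₁` is `ε₂`-DP, then the adaptive
composition is `(ε₁ + ε₂)`-DP. -/
theorem dp_adaptive_composition {X R₁ R₂ : Type*} [Countable R₁] [Countable R₂]
    (Adj : X → X → Prop) (ε₁ ε₂ : ℝ) (hε₁ : 0 ≤ ε₁) (hε₂ : 0 ≤ ε₂)
    (M₁ : X → PMF R₁) (M₂ : X → R₁ → PMF R₂)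
    (h₁ : IsDP Adj ε₁ M₁) (h₂ : ∀ r₁ : R₁, IsDP Adj ε₂ (fun x => M₂ x r₁)) :
    IsDP Adj (ε₁ + ε₂)
      (fun x => (M₁ x).bind (fun r₁ => (M₂ x r₁).map (fun r₂ => (r₁, r₂)))) := by
  intro x y hxy r
  obtain ⟨r₁, r₂⟩ := r
  simp only [bind_map_apply]
  have := h₁ x y hxy r₁
  have h2 := h₂ r₁ x y hxy r₂
  calc M₁ x r₁ * M₂ x r₁ r₂
      ≤ (ENNReal.ofReal (Real.exp ε₁) * M₁ y r₁) *
        (ENNReal.ofReal (Real.exp ε₂) * M₂ y r₁ r₂) := by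
        exact mul_le_mul' this h2
    _ = ENNReal.ofReal (Real.exp (ε₁ + ε₂)) * (M₁ y r₁ * M₂ y r₁ r₂) := by
        rw [Real.exp_add, ENNReal.ofReal_mul (Real.exp_nonneg _)]
        ring
end
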